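/- Suppose e is a nonzero element of the flux cone C that is NOT an elementary vector of ker(N), witnessed by some nonzero f ∈ ker(N) with supp(f) strictly contained in supp(e). Then there exists a nonzero element f' ∈ C with supp(f') strictly contained in supp(e); in particular e is not an EFM. (Explicitly: either f or −f or e + λf for a suitable maximal λ > 0 keeping nonnegativity on irreversible reactions serves as f'.) -/

import Mathlib

def fluxCone {S R : Type*} [Fintype R] (N : Matrix S R ℝ) (Rirr : Set R) :
    Set (R → ℝ) :=
  {f | N.mulVec f = 0 ∧ ∀ r ∈ Rirr, 0 ≤ f r}

def IsEFM {S R : Type*} [Fintype R] (N : Matrix S R ℝ) (Rirr : Set R)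
    (e : R → ℝ) : Prop :=
  e ∈ fluxCone N Rirr ∧ e ≠ 0 ∧
    ∀ g ∈ fluxCone N Rirr, g ≠ 0 →
      Function.support g ⊆ Function.support e →
      Function.support g = Function.support e

/-- if `e` is a nonzero flux mode and some nonzero `f ∈ ker N` has
support strictly contained in `supp e`, then some nonzero element of the flux
cone has support strictly contained in `supp e`; in particular `e` is not an
EFM. -/
theorem not_efm_of_smaller_kernel_support {S R : Type*} [Fintype S] [Fintype R]
    (N : Matrix S R ℝ) (Rirr : Set R) (e f : R → ℝ)
    (he : e ∈ fluxCone N Rirr) (hene : e ≠ 0)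
    (hf : N.mulVec f = 0) (hfne : f ≠ 0)
    (hsupp : Function.support f ⊂ Function.support e) :
    (∃ f' ∈ fluxCone N Rirr, f' ≠ 0 ∧
      Function.support f' ⊂ Function.support e) ∧ ¬ IsEFM N Rirr e := by
  classical
  have key : ∃ f' ∈ fluxCone N Rirr, f' ≠ 0 ∧
      Function.support f' ⊂ Function.support e := by
    by_cases hA : ∀ r ∈ Rirr, 0 ≤ f r
    · exact ⟨f, ⟨hf, hA⟩, hfne, hsupp⟩
    · push_neg at hA
      obtain ⟨r0, hr0irr, hr0⟩ := hA
      set A : Finset R := Finset.univ.filter (fun r => r ∈ Rirr ∧ f r < 0) with hAdef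
      have hAne : A.Nonempty := ⟨r0, by simp [hAdef, hr0irr, hr0]⟩
      obtain ⟨rm, hrmA, hrm⟩ := A.exists_min_image (fun r => e r / (-f r)) hAne
      have hrm' : rm ∈ Rirr ∧ f rm < 0 := by simpa [hAdef] using hrmA
      set lam := e rm / (-f rm) with hlam
      have hepos : ∀ r, r ∈ Rirr → f r < 0 → 0 < e r := by
        intro r hr hfr
        have hrs : r ∈ Function.support f := by
          simp only [Function.mem_support]; exact ne_of_lt hfr
        have hne : e r ≠ 0 := hsupp.1 hrs
        exact lt_of_le_of_ne (he.2 r hr) (Ne.symm hne)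
      have hlampos : 0 < lam := div_pos (hepos rm hrm'.1 hrm'.2) (by linarith [hrm'.2])
      have hsub : Function.support (e + lam • f) ⊆ Function.support e := by
        intro r hr
        by_contra hre
        have hef : e r = 0 := Function.notMem_support.mp hre
        have hff : f r = 0 := Function.notMem_support.mp (fun hh => hre (hsupp.1 hh))
        apply hr
        simp [hef, hff]
      have hzero : (e + lam • f) rm = 0 := by
        have hfm : f rm ≠ 0 := ne_of_lt hrm'.2
        have hfm' : (-f rm) ≠ 0 := neg_ne_zero.mpr hfm
        simp only [Pi.add_apply, Pi.smul_apply, smul_eq_mul, hlam]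
        rw [div_mul_eq_mul_div, div_neg, mul_div_assoc, div_self hfm, mul_one]
        ring
      refine ⟨e + lam • f, ⟨?_, ?_⟩, ?_, ?_⟩
      · rw [Matrix.mulVec_add, Matrix.mulVec_smul, he.1, hf]
        simp
      · intro r hr
        by_cases hfr : 0 ≤ f r
        · have := he.2 r hr
          simp only [Pi.add_apply, Pi.smul_apply, smul_eq_mul]
          nlinarith
        · push_neg at hfr
          have hrA : r ∈ A := by simp [hAdef, hr, hfr]
          have hle : lam ≤ e r / (-f r) := hrm r hrA
          have : lam * (-f r) ≤ e r := by
            rw [le_div_iff₀ (by linarith)] at hle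
            linarith
          simp only [Pi.add_apply, Pi.smul_apply, smul_eq_mul]
          linarith
      · obtain ⟨r1, hr1e, hr1f⟩ := Set.exists_of_ssubset hsupp
        intro hzero'
        have := congrFun hzero' r1
        have hfr1 : f r1 = 0 := Function.notMem_support.mp hr1f
        simp [hfr1] at this
        exact hr1e this
      · exact ⟨hsub, fun hcon => by
          have hrm_e : rm ∈ Function.support e :=
            Function.mem_support.mpr (ne_of_gt (hepos rm hrm'.1 hrm'.2))
          exact Function.mem_support.mp (hcon hrm_e) hzero⟩
  refine ⟨key, fun hE => ?_⟩
  obtain ⟨f', hf'C, hf'ne, hf'ss⟩ := key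
  exact hf'ss.ne (hE.2.2 f' hf'C hf'ne hf'ss.1)
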